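/- If a, b, c are positive integers such that supp(c) ∩ supp(b) is nonempty, supp(c) ∩ supp(a) is empty, and supp(c) \ supp(b) is nonempty, then there exists a positive integer m such that supp(m) ∩ supp(c) is nonempty, supp(m) ∩ supp(b) is empty, and supp(m) \ supp(c) is nonempty. -/

import Mathlib

def supp (k : ℕ) : Set ℕ := {i | Nat.testBit k i}

def s2 (n : ℕ) : ℕ := (Nat.digits 2 n).sum

theorem no_dead_end (a b c : ℕ) (ha : 0 < a) (hb : 0 < b) (hc : 0 < c)
    (h1 : (supp c ∩ supp b).Nonempty)
    (h2 : supp c ∩ supp a = ∅)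
    (h3 : (supp c \ supp b).Nonempty) :
    ∃ m : ℕ, 0 < m ∧ (supp m ∩ supp c).Nonempty ∧ supp m ∩ supp b = ∅ ∧
      (supp m \ supp c).Nonempty := by
  obtain ⟨i, hic, hib⟩ := h3
  set j := max b c + 1 with hj
  have hpow : max b c < 2 ^ j :=
    lt_of_lt_of_le (Nat.lt_pow_self one_lt_two (n := max b c))
      (Nat.pow_le_pow_right (by norm_num) (Nat.le_succ _))
  have hjb : ¬ Nat.testBit b j := by
    simp [Nat.testBit_eq_false_of_lt (lt_of_le_of_lt (le_max_left b c) hpow)]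
  have hjc : ¬ Nat.testBit c j := by
    simp [Nat.testBit_eq_false_of_lt (lt_of_le_of_lt (le_max_right b c) hpow)]
  refine ⟨2 ^ i ||| 2 ^ j, ?_, ⟨i, ?_, hic⟩, ?_, ⟨j, ?_, hjc⟩⟩
  · have : 2 ^ i ||| 2 ^ j ≠ 0 := by
      intro h
      have := congrArg (fun n => Nat.testBit n i) h
      simp [Nat.testBit_lor, Nat.testBit_two_pow_self] at this
    omega
  · simp [supp, Nat.testBit_lor, Nat.testBit_two_pow_self]
  · ext k
    simp only [supp, Set.mem_inter_iff, Set.mem_setOf_eq, Nat.testBit_lor, Bool.or_eq_true,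
      Set.mem_empty_iff_false, iff_false, not_and]
    rintro (hk | hk)
    · simp only [Nat.testBit_two_pow, decide_eq_true_eq] at hk
      subst hk; exact fun h => hib h
    · simp only [Nat.testBit_two_pow, decide_eq_true_eq] at hk
      subst hk; exact fun h => hjb h
  · simp [supp, Nat.testBit_lor, Nat.testBit_two_pow_self]
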